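/- The set H_D ⊂ S_n is a complete system of representatives of the left cosets of Stab_{S_n}({1,…,D}) (the pointwise stabilizer of 1, …, D in S_n), i.e., S_n is the disjoint union over g ∈ H_D of the cosets g⁻¹ · Stab, equivalently: for every σ ∈ S_n there exist unique g ∈ H_D and h ∈ Stab_{S_n}^{pt}(1,…,D) with σ = g⁻¹ h, where Stab_{S_n}^{pt}(1,…,D) = {h ∈ S_n : h(d) = d for d = 1,…,D}. -/

import Mathlib

/-- The equivalence between `Fin (n - i)` and the elements of `Fin n` that are `≥ i`. -/
def shiftEquiv (n i : ℕ) : Fin (n - i) ≃ {j : Fin n // i ≤ (j : ℕ)} where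
  toFun k := ⟨⟨i + k.val, by omega⟩, by simp⟩
  invFun j := ⟨(j : Fin n).val - i, by omega⟩
  left_inv k := by ext; simp
  right_inv j := by
    apply Subtype.ext
    apply Fin.ext
    have := j.2
    simp
    omega

/-- The cyclic permutation of order `n - i` on `{i+1, …, n}` (0-indexed: on the
elements of `Fin n` that are `≥ i`), fixing `{1, …, i}` pointwise.
Its powers form the cyclic group `C_{n-i}` of the paper. -/
def cyc (n i : ℕ) : Equiv.Perm (Fin n) :=
  (finRotate (n - i)).extendDomain (shiftEquiv n i)

/-- `H_D = {σ_D ⋯ σ_1 : σ_i ∈ C_{n-D+i}}`: the set of products of one element of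
each cyclic group `C_{n-D+i}` (the factor from `C_n` being applied first, then the
factor from `C_{n-1}`, …, the factor from `C_{n-D+1}` applied last). -/
def HD (n D : ℕ) : Set (Equiv.Perm (Fin n)) :=
  {g | ∃ σ : Fin D → Equiv.Perm (Fin n),
    (∀ d : Fin D, σ d ∈ Subgroup.zpowers (cyc n d.val)) ∧
      g = (List.ofFn σ).reverse.prod}

open Equiv Equiv.Perm

lemma cyc_apply_of_lt {n i : ℕ} {x : Fin n} (hx : (x : ℕ) < i) : cyc n i x = x :=
  Perm.extendDomain_apply_not_subtype _ _ (not_le.mpr hx)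

lemma zpowers_cyc_apply_of_lt {n i : ℕ} {τ : Perm (Fin n)}
    (hτ : τ ∈ Subgroup.zpowers (cyc n i)) {x : Fin n} (hx : (x : ℕ) < i) : τ x = x := by
  obtain ⟨z, rfl⟩ := hτ
  exact Perm.zpow_apply_eq_self_of_apply_eq_self (cyc_apply_of_lt hx) z

lemma cyc_pow_apply {n i : ℕ} (k : ℕ) {x : Fin n} (hx : i ≤ (x : ℕ)) :
    ((cyc n i) ^ k) x =
      ((shiftEquiv n i) (((finRotate (n - i)) ^ k) ((shiftEquiv n i).symm ⟨x, hx⟩)) : Fin n) := by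
  have h1 : (cyc n i) ^ k = ((finRotate (n - i)) ^ k).extendDomain (shiftEquiv n i) :=
    (Perm.extendDomain_pow (e := finRotate (n - i)) (f := shiftEquiv n i) k).symm
  have h2 : x = ((shiftEquiv n i) ((shiftEquiv n i).symm ⟨x, hx⟩) : Fin n) := by simp
  rw [h1]
  conv_lhs => rw [h2]
  exact Perm.extendDomain_apply_image _ _ _

open Fin.NatCast in
lemma finRotate_pow_apply {m : ℕ} [NeZero m] (k : ℕ) (a : Fin m) :
    ((finRotate m) ^ k) a = a + (k : Fin m) := by
  obtain ⟨m, rfl⟩ := Nat.exists_eq_succ_of_ne_zero (NeZero.ne m)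
  induction k with
  | zero => simp
  | succ k ih =>
    rw [pow_succ', Perm.mul_apply, ih, finRotate_succ_apply, Nat.cast_succ, add_assoc]

open Fin.NatCast in
lemma exists_pow_cyc_eq {n i : ℕ} {x : Fin n} (hx : i ≤ (x : ℕ)) :
    ∃ k : ℕ, ((cyc n i) ^ k) x = ⟨i, lt_of_le_of_lt hx x.isLt⟩ := by
  have hm : n - i ≠ 0 := by have := x.isLt; omega
  haveI : NeZero (n - i) := ⟨hm⟩
  set a := (shiftEquiv n i).symm ⟨x, hx⟩ with ha
  refine ⟨(n - i) - a.val, ?_⟩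
  rw [cyc_pow_apply _ hx, finRotate_pow_apply]
  apply Fin.ext
  have hval : ((a + ((n - i - a.val : ℕ) : Fin (n - i))).val) = 0 := by
    rw [Fin.val_add, Fin.val_natCast]
    have h1 := a.isLt
    rcases Nat.eq_zero_or_pos a.val with h | h
    · rw [h, Nat.zero_add, Nat.sub_zero, Nat.mod_self, Nat.zero_mod]
    · have h2 : n - i - a.val < n - i := by omega
      rw [Nat.mod_eq_of_lt h2]
      have : a.val + (n - i - a.val) = n - i := by omega
      rw [this, Nat.mod_self]
  show i + _ = i
  rw [hval]
  exact Nat.add_zero i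

lemma cyc_apply_ne {n i : ℕ} (h2 : 2 ≤ n - i) {x : Fin n} (hx : i ≤ (x : ℕ)) :
    cyc n i x ≠ x := by
  have h1 : cyc n i x =
      ((shiftEquiv n i) ((finRotate (n - i)) ((shiftEquiv n i).symm ⟨x, hx⟩)) : Fin n) := by
    have := cyc_pow_apply (n := n) (i := i) 1 hx
    simpa using this
  intro hcon
  have hne : (finRotate (n - i)) ((shiftEquiv n i).symm ⟨x, hx⟩) ≠ (shiftEquiv n i).symm ⟨x, hx⟩ := by
    have := support_finRotate_of_le h2
    intro hfix
    have : ((shiftEquiv n i).symm ⟨x, hx⟩) ∈ Equiv.Perm.support (finRotate (n - i)) := by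
      rw [this]; exact Finset.mem_univ _
    exact (Equiv.Perm.mem_support.mp this) hfix
  apply hne
  apply (shiftEquiv n i).injective
  apply Subtype.ext
  rw [← h1, hcon]
  simp

lemma zpowers_cyc_eq_of_apply_eq {n i : ℕ} {τ₁ τ₂ : Perm (Fin n)}
    (h₁ : τ₁ ∈ Subgroup.zpowers (cyc n i)) (h₂ : τ₂ ∈ Subgroup.zpowers (cyc n i))
    {x : Fin n} (hx : i ≤ (x : ℕ)) (hxy : τ₁ x = τ₂ x) : τ₁ = τ₂ := by
  have hin : i < n := lt_of_le_of_lt hx x.isLt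
  rcases lt_or_ge (n - i) 2 with hm | hm
  · -- n - i = 1 so cyc n i = 1
    have hm1 : n - i = 1 := by omega
    have hc1 : cyc n i = 1 := by
      have hfs : finRotate (n - i) = 1 := by
        haveI : Subsingleton (Fin (n - i)) := by rw [hm1]; infer_instance
        ext a
        exact congrArg Fin.val (Subsingleton.elim _ _)
      rw [cyc, hfs]
      exact Perm.extendDomain_one _
    rw [hc1, Subgroup.zpowers_one_eq_bot, Subgroup.mem_bot] at h₁ h₂
    rw [h₁, h₂]
  · have hc : (cyc n i).IsCycle := (isCycle_finRotate_of_le hm).extendDomain _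
    have hne : cyc n i x ≠ x := cyc_apply_ne hm hx
    -- the element τ₂⁻¹ * τ₁ is in zpowers and fixes x
    have hmem : τ₂⁻¹ * τ₁ ∈ Subgroup.zpowers (cyc n i) :=
      Subgroup.mul_mem _ (Subgroup.inv_mem _ h₂) h₁
    have hfix : (τ₂⁻¹ * τ₁) x = x := by
      rw [Perm.mul_apply, hxy]
      exact Equiv.symm_apply_apply τ₂ x
    obtain ⟨z, hz⟩ := Subgroup.mem_zpowers_iff.mp hmem
    -- convert to a natural power
    have hord : (orderOf (cyc n i) : ℤ) ≠ 0 := by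
      exact_mod_cast (orderOf_pos (cyc n i)).ne'
    have hnat : (cyc n i) ^ z = (cyc n i) ^ (z % (orderOf (cyc n i) : ℤ)).toNat := by
      rw [← zpow_natCast, Int.toNat_of_nonneg (Int.emod_nonneg z hord), zpow_mod_orderOf]
    have h1 : (cyc n i) ^ (z % (orderOf (cyc n i) : ℤ)).toNat = 1 := by
      apply (hc.pow_eq_one_iff' hne).mpr
      rw [← hnat, hz]
      exact hfix
    have hone : τ₂⁻¹ * τ₁ = 1 := by rw [← hz, hnat, h1]
    exact (inv_mul_eq_one.mp hone).symm

lemma mem_HD_zero {n : ℕ} {g : Perm (Fin n)} : g ∈ HD n 0 ↔ g = 1 := by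
  constructor
  · rintro ⟨σ, -, rfl⟩
    simp [List.ofFn_zero]
  · rintro rfl
    exact ⟨Fin.elim0, fun d => d.elim0, by simp [List.ofFn_zero]⟩

lemma mem_HD_succ {n D : ℕ} {g : Perm (Fin n)} :
    g ∈ HD n (D + 1) ↔
      ∃ τ ∈ Subgroup.zpowers (cyc n D), ∃ g₀ ∈ HD n D, g = τ * g₀ := by
  constructor
  · rintro ⟨σ, hσ, rfl⟩
    refine ⟨σ (Fin.last D), by simpa using hσ (Fin.last D),
      (List.ofFn fun i => σ i.castSucc).reverse.prod,
      ⟨fun i => σ i.castSucc, fun d => by simpa using hσ d.castSucc, rfl⟩, ?_⟩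
    rw [List.ofFn_succ']
    simp [List.concat_eq_append]
  · rintro ⟨τ, hτ, g₀, ⟨σ₀, hσ₀, rfl⟩, rfl⟩
    refine ⟨Fin.snoc σ₀ τ, fun d => ?_, ?_⟩
    · refine Fin.lastCases ?_ ?_ d
      · simpa using hτ
      · intro i
        simpa using hσ₀ i
    · rw [List.ofFn_succ']
      simp [List.concat_eq_append]

lemma key (n : ℕ) : ∀ (D : ℕ) (hD : D ≤ n) (σ : Equiv.Perm (Fin n)),
    ∃! gh : Equiv.Perm (Fin n) × Equiv.Perm (Fin n),
      gh.1 ∈ HD n D ∧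
      (∀ d : Fin D, gh.2 (Fin.castLE hD d) = Fin.castLE hD d) ∧
      σ = gh.1⁻¹ * gh.2 := by
  intro D
  induction D with
  | zero =>
    intro hD σ
    refine ⟨(1, σ), ⟨mem_HD_zero.mpr rfl, fun d => d.elim0, by simp⟩, ?_⟩
    rintro ⟨g, h⟩ ⟨hg, -, hσ⟩
    have hg1 : g = 1 := mem_HD_zero.mp hg
    subst hg1
    simp only [inv_one, one_mul] at hσ
    rw [hσ]
  | succ D ih =>
    intro hD σ
    have hD' : D ≤ n := Nat.le_of_succ_le hD
    have hDn : D < n := hD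
    obtain ⟨⟨g, h⟩, ⟨hg, hh, hσ⟩, huniq⟩ := ih hD' σ
    set xD : Fin n := ⟨D, hDn⟩ with hxD
    have hhx : D ≤ ((h xD : Fin n) : ℕ) := by
      by_contra hlt
      push_neg at hlt
      have he : Fin.castLE hD' ⟨((h xD : Fin n) : ℕ), hlt⟩ = h xD := by
        apply Fin.ext; simp
      have : h (h xD) = h xD := by
        conv_lhs => rw [← he]
        rw [hh ⟨_, hlt⟩, he]
      have := h.injective this
      rw [this] at hlt
      simp [hxD] at hlt
    obtain ⟨k, hk⟩ := exists_pow_cyc_eq hhx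
    set τ : Perm (Fin n) := (cyc n D) ^ k with hτdef
    have hτ : τ ∈ Subgroup.zpowers (cyc n D) :=
      Subgroup.mem_zpowers_iff.mpr ⟨(k : ℤ), by rw [zpow_natCast]⟩
    have hτh : ∀ d : Fin (D + 1), (τ * h) (Fin.castLE hD d) = Fin.castLE hD d := by
      intro d
      rcases lt_or_eq_of_le (Nat.lt_succ_iff.mp d.isLt) with hd | hd
      · have he : Fin.castLE hD d = Fin.castLE hD' ⟨(d : ℕ), hd⟩ := by apply Fin.ext; simp
        rw [Perm.mul_apply, he, hh ⟨(d : ℕ), hd⟩,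
          zpowers_cyc_apply_of_lt hτ (by simpa using hd)]
      · have he : Fin.castLE hD d = xD := by apply Fin.ext; simpa using hd
        rw [Perm.mul_apply, he, hτdef, hk]
    refine ⟨(τ * g, τ * h), ⟨mem_HD_succ.mpr ⟨τ, hτ, g, hg, rfl⟩, hτh, ?_⟩, ?_⟩
    · rw [hσ]; group
    rintro ⟨G, H⟩ ⟨hG, hH, hσ'⟩
    obtain ⟨τ', hτ', g₀, hg₀, rfl⟩ := mem_HD_succ.mp hG
    have hpair : (g₀, τ'⁻¹ * H) = (g, h) := by
      apply huniq
      refine ⟨hg₀, fun d => ?_, ?_⟩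
      · have he : Fin.castLE hD' d = Fin.castLE hD ⟨(d : ℕ), Nat.lt_succ_of_lt d.isLt⟩ := by
          apply Fin.ext; simp
        rw [Perm.mul_apply, he, hH ⟨(d : ℕ), Nat.lt_succ_of_lt d.isLt⟩, ← he,
          zpowers_cyc_apply_of_lt (Subgroup.inv_mem _ hτ') (by simp)]
      · rw [hσ']; group
    have hg₀g : g₀ = g := congrArg Prod.fst hpair
    have hH' : H = τ' * h := by
      have := congrArg Prod.snd hpair
      simp only at this
      rw [← this, ← mul_assoc, mul_inv_cancel, one_mul]
    have hτx : τ' (h xD) = xD := by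
      have h1 := hH ⟨D, Nat.lt_succ_self D⟩
      have he : Fin.castLE hD ⟨D, Nat.lt_succ_self D⟩ = xD := by apply Fin.ext; simp [hxD]
      rw [he, hH'] at h1
      exact h1
    have hττ : τ' = τ := by
      apply zpowers_cyc_eq_of_apply_eq hτ' hτ hhx
      rw [hτx, hτdef, hk]
    rw [hg₀g, hH', hττ]



/-- **`H_D` is a complete system of representatives of the left cosets of the
pointwise stabilizer of `{1, …, D}` in `S_n`:** every `σ ∈ S_n` can be written
uniquely as `σ = g⁻¹ * h` with `g ∈ H_D` and `h` fixing `1, …, D` pointwise. -/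
theorem HD_coset_representatives (n D : ℕ) (hD : D ≤ n) (σ : Equiv.Perm (Fin n)) :
    ∃! gh : Equiv.Perm (Fin n) × Equiv.Perm (Fin n),
      gh.1 ∈ HD n D ∧
      (∀ d : Fin D, gh.2 (Fin.castLE hD d) = Fin.castLE hD d) ∧
      σ = gh.1⁻¹ * gh.2 :=
  key n D hD σ
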